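/- The SAF invariant of an interval exchange transformation f of I = [p,q) is well defined: if I = I_1 ∪ ... ∪ I_k and I = I'_1 ∪ ... ∪ I'_m are two partitions of I into half-open intervals on which f acts by translations t_i respectively t'_j, and λ_i, λ'_j denote the lengths, then Σ_i λ_i ⊗ t_i = Σ_j λ'_j ⊗ t'_j in ℝ ⊗_ℚ ℝ. -/

import Mathlib

open scoped TensorProduct

/-- An interval exchange transformation of the half-open interval `[p, q)`:
a bijection of `[p, q)` onto itself, extended by the identity outside,
which is a translation on each piece of a finite partition of `[p, q)`
into half-open intervals. -/
def IsIET (p q : ℝ) (f : ℝ → ℝ) : Prop :=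
  Set.BijOn f (Set.Ico p q) (Set.Ico p q) ∧
  (∀ x, x ∉ Set.Ico p q → f x = x) ∧
  ∃ (n : ℕ) (pt : Fin (n + 1) → ℝ),
    StrictMono pt ∧ pt 0 = p ∧ pt (Fin.last n) = q ∧
    ∀ i : Fin n, ∃ t : ℝ,
      ∀ x ∈ Set.Ico (pt i.castSucc) (pt i.succ), f x = x + t

/-- A restricted rotation of type `(a, b)` on `[p, q)`: it exchanges two
adjacent half-open intervals of lengths `a` (on the left) and `b` (on the
right) by translation, fixing the rest of the line. -/
def IsRestrictedRotation (p q a b : ℝ) (f : ℝ → ℝ) : Prop :=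
  0 < a ∧ 0 < b ∧ ∃ x : ℝ, p ≤ x ∧ x + a + b ≤ q ∧
    (∀ y ∈ Set.Ico x (x + a), f y = y + b) ∧
    (∀ y ∈ Set.Ico (x + a) (x + a + b), f y = y - a) ∧
    (∀ y, y ∉ Set.Ico x (x + a + b) → f y = y)

/-- An interval swap map of type `a` on `[p, q)`: it interchanges two
disjoint half-open intervals of length `a` by translation, fixing the
rest of the line. -/
def IsIntervalSwap (p q a : ℝ) (f : ℝ → ℝ) : Prop :=
  0 < a ∧ ∃ x y : ℝ, p ≤ x ∧ x + a ≤ y ∧ y + a ≤ q ∧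
    (∀ z ∈ Set.Ico x (x + a), f z = z + (y - x)) ∧
    (∀ z ∈ Set.Ico y (y + a), f z = z - (y - x)) ∧
    (∀ z, z ∉ Set.Ico x (x + a) ∪ Set.Ico y (y + a) → f z = z)

/-- `f` is a finite product (composition) of interval swap maps on `[p, q)`. -/
def IsSwapProduct (p q : ℝ) (f : ℝ → ℝ) : Prop :=
  ∃ L : List (ℝ → ℝ), (∀ g ∈ L, ∃ a, IsIntervalSwap p q a g) ∧
    f = L.foldr (· ∘ ·) id

/-- `ξ ∈ ℝ ⊗[ℚ] ℝ` is the SAF sum of `f` computed from some partition of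
`[p, q)` into half-open intervals on each of which `f` is a translation. -/
def HasSAF (p q : ℝ) (f : ℝ → ℝ) (ξ : ℝ ⊗[ℚ] ℝ) : Prop :=
  ∃ (n : ℕ) (pt : Fin (n + 1) → ℝ) (t : Fin n → ℝ),
    StrictMono pt ∧ pt 0 = p ∧ pt (Fin.last n) = q ∧
    (∀ i : Fin n, ∀ x ∈ Set.Ico (pt i.castSucc) (pt i.succ), f x = x + t i) ∧
    ξ = ∑ i : Fin n, (pt i.succ - pt i.castSucc) ⊗ₜ[ℚ] t i


open MeasureTheory

noncomputable def contrSAF (φ : ℝ →ₗ[ℚ] ℚ) : ℝ ⊗[ℚ] ℝ →ₗ[ℚ] ℝ :=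
  TensorProduct.lift (((LinearMap.lsmul ℚ ℝ).flip).compl₂ φ)

@[simp] lemma contrSAF_tmul (φ : ℝ →ₗ[ℚ] ℚ) (x y : ℝ) :
    contrSAF φ (x ⊗ₜ[ℚ] y) = (φ y : ℝ) * x := by
  simp [contrSAF, Rat.smul_def]

lemma contrSAF_injective (ξ ξ' : ℝ ⊗[ℚ] ℝ)
    (h : ∀ φ : ℝ →ₗ[ℚ] ℚ, contrSAF φ ξ = contrSAF φ ξ') : ξ = ξ' := by
  set b := Module.Basis.ofVectorSpace ℚ ℝ with hb
  set e := (TensorProduct.congr (LinearEquiv.refl ℚ ℝ) b.repr).trans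
    (TensorProduct.finsuppScalarRight ℚ ℚ ℝ _) with he
  have key : ∀ (i) (ζ : ℝ ⊗[ℚ] ℝ), e ζ i = contrSAF (b.coord i) ζ := by
    intro i ζ
    induction ζ using TensorProduct.induction_on with
    | zero => simp
    | tmul x y =>
        simp [he, TensorProduct.finsuppScalarRight_apply_tmul_apply, Rat.smul_def,
          Module.Basis.coord_apply, mul_comm]
    | add u v hu hv => simp [map_add, hu, hv]
  apply e.injective
  ext i
  rw [key i ξ, key i ξ', h]


lemma step_ae (a b c : ℝ) (F : ℝ → ℝ) (hab : a ≤ b)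
    (hF : ∀ x ∈ Set.Ico a b, F x = c) :
    ∀ᵐ x : ℝ ∂volume, x ∈ Set.uIoc a b → F x = c := by
  have hbe : ∀ᵐ x : ℝ ∂volume, x ≠ b := by
    rw [ae_iff]
    convert Real.volume_singleton (a := b) using 2
    ext x; simp
  filter_upwards [hbe] with x hxb hx
  rw [Set.uIoc_of_le hab] at hx
  exact hF x ⟨hx.1.le, lt_of_le_of_ne hx.2 hxb⟩

lemma step_integrable (a b c : ℝ) (F : ℝ → ℝ) (hab : a ≤ b)
    (hF : ∀ x ∈ Set.Ico a b, F x = c) : IntervalIntegrable F volume a b := by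
  refine (_root_.intervalIntegrable_const (c := c)).congr_ae ?_
  refine ((ae_restrict_iff' (measurableSet_uIoc : MeasurableSet (Set.uIoc a b))).2 ?_)
  filter_upwards [step_ae a b c F hab hF] with x hx hmem
  exact (hx hmem).symm

lemma step_integral (a b c : ℝ) (F : ℝ → ℝ) (hab : a ≤ b)
    (hF : ∀ x ∈ Set.Ico a b, F x = c) :
    ∫ x in a..b, F x = (b - a) * c := by
  rw [intervalIntegral.integral_congr_ae (step_ae a b c F hab hF),
    intervalIntegral.integral_const, smul_eq_mul]

lemma sum_step_integral (p q : ℝ) (F : ℝ → ℝ) {n : ℕ} (pt : Fin (n + 1) → ℝ) (c : Fin n → ℝ)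
    (hmono : StrictMono pt) (h0 : pt 0 = p) (hl : pt (Fin.last n) = q)
    (hF : ∀ i : Fin n, ∀ x ∈ Set.Ico (pt i.castSucc) (pt i.succ), F x = c i) :
    ∑ i : Fin n, (pt i.succ - pt i.castSucc) * c i = ∫ x in p..q, F x := by
  set A : ℕ → ℝ := fun k => if h : k ≤ n then pt ⟨k, by omega⟩ else q with hA
  have hAcast : ∀ i : Fin n, A (i : ℕ) = pt i.castSucc := by
    intro i
    simp only [hA, dif_pos (le_of_lt i.2)]
    congr 1
  have hAsucc : ∀ i : Fin n, A ((i : ℕ) + 1) = pt i.succ := by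
    intro i
    simp only [hA, dif_pos (Nat.succ_le_of_lt i.2)]
    congr 1
  have hint : ∀ k < n, IntervalIntegrable F volume (A k) (A (k + 1)) := by
    intro k hk
    rw [hAcast ⟨k, hk⟩, hAsucc ⟨k, hk⟩]
    exact step_integrable _ _ _ _ (hmono Fin.castSucc_lt_succ).le (hF ⟨k, hk⟩)
  have hsum := intervalIntegral.sum_integral_adjacent_intervals (f := F) (μ := volume) hint
  have hA0 : A 0 = p := by simp [hA, h0]
  have hAn : A n = q := by
    simp only [hA, dif_pos le_rfl]
    rw [← hl]; rfl
  rw [hA0, hAn] at hsum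
  rw [← hsum, ← Fin.sum_univ_eq_sum_range (fun k => ∫ x in A k..A (k + 1), F x) n]
  refine Finset.sum_congr rfl fun i _ => ?_
  rw [hAcast i, hAsucc i]
  exact (step_integral _ _ _ _ (hmono Fin.castSucc_lt_succ).le (hF i)).symm

/-- The SAF invariant of an interval exchange transformation is well defined:
any two partitions of `[p, q)` on which `f` acts by translations give the same
sum `Σ λᵢ ⊗ tᵢ` in `ℝ ⊗[ℚ] ℝ`. -/
theorem saf_well_defined (p q : ℝ) (f : ℝ → ℝ) (hf : IsIET p q f)
    (ξ ξ' : ℝ ⊗[ℚ] ℝ) (h : HasSAF p q f ξ) (h' : HasSAF p q f ξ') :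
    ξ = ξ' := by
  obtain ⟨n, pt, t, hmono, h0, hl, htr, hξ⟩ := h
  obtain ⟨m, pt', t', hmono', h0', hl', htr', hξ'⟩ := h'
  apply contrSAF_injective
  intro φ
  have key : ∀ (k : ℕ) (P : Fin (k + 1) → ℝ) (T : Fin k → ℝ), StrictMono P → P 0 = p →
      P (Fin.last k) = q →
      (∀ i : Fin k, ∀ x ∈ Set.Ico (P i.castSucc) (P i.succ), f x = x + T i) →
      contrSAF φ (∑ i : Fin k, (P i.succ - P i.castSucc) ⊗ₜ[ℚ] T i) =
        ∫ x in p..q, (φ (f x - x) : ℝ) := by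
    intro k P T hm hP0 hPl hT
    rw [map_sum]
    simp only [contrSAF_tmul]
    rw [← sum_step_integral p q (fun x => (φ (f x - x) : ℝ)) P (fun i => (φ (T i) : ℝ))
      hm hP0 hPl ?_]
    · exact Finset.sum_congr rfl fun i _ => mul_comm _ _
    · intro i x hx
      simp [hT i x hx]
  rw [hξ, hξ', key n pt t hmono h0 hl htr, key m pt' t' hmono' h0' hl' htr']
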